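/- Assume r ≥ 2, n i ≠ −1 for all i, ∑_{i} n i = −2, and at most two indices i have n i odd. Then H equals the kernel of the homomorphism Φ̄ : G → ∏_{i < j} ZMod (N i j) defined componentwise by Φ̄(x)_{i j} = (reduction of x i to ZMod (N i j)) − (reduction of x j to ZMod (N i j)). -/

import Mathlib

/-- `N i j`: the gcd (as a nonnegative integer) of the family consisting of `n k` for
`k ∉ {i, j}` together with `n i + 1` and `n j + 1`. -/
def Npair {r : ℕ} (n : Fin r → ℤ) (i j : Fin r) : ℕ :=
  Nat.gcd ((Finset.univ \ {i, j}).gcd fun k => (n k).natAbs)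
    (Nat.gcd (n i + 1).natAbs (n j + 1).natAbs)

/-- The element `m • e i` of `G = ∏_{j} ZMod |n j + 1|`: the `i`-th coordinate is the image
of `m` in `ZMod |n i + 1|`, and all other coordinates are `0`. -/
def esingle {r : ℕ} (n : Fin r → ℤ) (i : Fin r) (m : ℤ) :
    (j : Fin r) → ZMod ((n j + 1).natAbs) :=
  Pi.single i (m : ZMod ((n i + 1).natAbs))

/-- `τ i j = (n j) • e i + (n i) • e j`. -/
def tau {r : ℕ} (n : Fin r → ℤ) (i j : Fin r) : (k : Fin r) → ZMod ((n k + 1).natAbs) :=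
  esingle n i (n j) + esingle n j (n i)

/-- `H`: the subgroup of `G` generated by the elements `τ i j` over all pairs `i ≠ j`. -/
def Hsub {r : ℕ} (n : Fin r → ℤ) : AddSubgroup ((k : Fin r) → ZMod ((n k + 1).natAbs)) :=
  AddSubgroup.closure {x | ∃ i j, i ≠ j ∧ x = tau n i j}

lemma Npair_dvd_fst {r : ℕ} (n : Fin r → ℤ) (i j : Fin r) : Npair n i j ∣ (n i + 1).natAbs :=
  (Nat.gcd_dvd_right _ _).trans (Nat.gcd_dvd_left _ _)

lemma Npair_dvd_snd {r : ℕ} (n : Fin r → ℤ) (i j : Fin r) : Npair n i j ∣ (n j + 1).natAbs :=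
  (Nat.gcd_dvd_right _ _).trans (Nat.gcd_dvd_right _ _)

/-- The homomorphism `Φ̄ : G → ∏_{i < j} ZMod (N i j)`, whose `(i, j)`-component is the
reduction of `x i` minus the reduction of `x j` in `ZMod (N i j)`. -/
def Phibar {r : ℕ} (n : Fin r → ℤ) :
    ((i : Fin r) → ZMod ((n i + 1).natAbs)) →+
      ((p : {p : Fin r × Fin r // p.1 < p.2}) → ZMod (Npair n p.1.1 p.1.2)) :=
  AddMonoidHom.mk'
    (fun x p =>
      ZMod.castHom (Npair_dvd_fst n p.1.1 p.1.2) (ZMod (Npair n p.1.1 p.1.2)) (x p.1.1)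
        - ZMod.castHom (Npair_dvd_snd n p.1.1 p.1.2) (ZMod (Npair n p.1.1 p.1.2)) (x p.1.2))
    (fun x y => by funext p; simp [Pi.add_apply, map_add]; ring)

namespace HsubProof

variable {r : ℕ}

lemma natdvd_to_int {b : ℕ} {a : ℤ} (h : b ∣ a.natAbs) : (b : ℤ) ∣ a :=
  Int.dvd_natAbs.mp (Int.natCast_dvd_natCast.mpr h)

lemma Npair_dvd_int_fst (n : Fin r → ℤ) (i j : Fin r) : (Npair n i j : ℤ) ∣ n i + 1 :=
  natdvd_to_int (Npair_dvd_fst n i j)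

lemma Npair_dvd_int_snd (n : Fin r → ℤ) (i j : Fin r) : (Npair n i j : ℤ) ∣ n j + 1 :=
  natdvd_to_int (Npair_dvd_snd n i j)

lemma Npair_dvd_other (n : Fin r → ℤ) {i j k : Fin r} (h1 : k ≠ i) (h2 : k ≠ j) :
    (Npair n i j : ℤ) ∣ n k := by
  refine natdvd_to_int ((Nat.gcd_dvd_left _ _).trans (Finset.gcd_dvd ?_))
  simp [Finset.mem_sdiff, h1, h2]

lemma Npair_comm (n : Fin r → ℤ) (i j : Fin r) : Npair n i j = Npair n j i := by
  unfold Npair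
  rw [Finset.pair_comm, Nat.gcd_comm ((n i + 1).natAbs)]

/-- the reduction map `ℤ^r → G`. -/
def pih (n : Fin r → ℤ) : (Fin r → ℤ) →+ ((k : Fin r) → ZMod ((n k + 1).natAbs)) :=
  AddMonoidHom.mk' (fun y k => ((y k : ℤ) : ZMod ((n k + 1).natAbs)))
    (fun y z => by funext k; simp)

lemma pih_apply (n : Fin r → ℤ) (y : Fin r → ℤ) (k : Fin r) :
    pih n y k = ((y k : ℤ) : ZMod ((n k + 1).natAbs)) := rfl

/-- the integer lattice: preimage of `Hsub`. -/
def Zsub (n : Fin r → ℤ) : AddSubgroup (Fin r → ℤ) := (Hsub n).comap (pih n)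

lemma pih_single (n : Fin r → ℤ) (i : Fin r) (m : ℤ) :
    pih n (Pi.single i m) = esingle n i m := by
  funext k
  rcases eq_or_ne k i with rfl | h
  · simp [pih_apply, esingle]
  · simp [pih_apply, esingle, Pi.single_eq_of_ne h]

lemma zsingle (n : Fin r → ℤ) (i : Fin r) (t : ℤ) :
    Pi.single i ((n i + 1) * t) ∈ Zsub n := by
  have : pih n (Pi.single i ((n i + 1) * t)) = 0 := by
    rw [pih_single]
    funext k
    rcases eq_or_ne k i with rfl | h
    · simp only [esingle, Pi.single_eq_same]
      rw [show (((n k + 1) * t : ℤ) : ZMod ((n k + 1).natAbs)) =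
        ((n k + 1 : ℤ) : ZMod ((n k + 1).natAbs)) * (t : ZMod ((n k + 1).natAbs)) by push_cast; ring]
      rw [(ZMod.intCast_zmod_eq_zero_iff_dvd _ _).mpr (natdvd_to_int dvd_rfl)]
      simp
    · simp [esingle, Pi.single_eq_of_ne h]
  simpa [Zsub, AddSubgroup.mem_comap, this] using (AddSubgroup.zero_mem (Hsub n))

lemma ztau (n : Fin r → ℤ) {i j : Fin r} (h : i ≠ j) :
    (Pi.single i (n j) + Pi.single j (n i) : Fin r → ℤ) ∈ Zsub n := by
  have : pih n (Pi.single i (n j) + Pi.single j (n i)) = tau n i j := by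
    rw [map_add, pih_single, pih_single]; rfl
  simp only [Zsub, AddSubgroup.mem_comap, this]
  exact AddSubgroup.subset_closure ⟨i, j, h, rfl⟩

lemma zsmul_single (i : Fin r) (c x : ℤ) :
    x • (Pi.single i c : Fin r → ℤ) = Pi.single i (c * x) := by
  funext k
  rcases eq_or_ne k i with rfl | h
  · simp [mul_comm]
  · simp [Pi.single_eq_of_ne h]

lemma zone_identity (n : Fin r → ℤ) (hsum : ∑ i, n i = -2) (i : Fin r) :
    (fun _ => n i : Fin r → ℤ) =
      (∑ j ∈ Finset.univ.erase i, (Pi.single i (n j) + Pi.single j (n i)))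
        + Pi.single i ((n i + 1) * 2) := by
  funext m
  rw [Pi.add_apply, Finset.sum_apply]
  rcases eq_or_ne m i with rfl | h
  · rw [Finset.sum_congr rfl (fun j hj => show (Pi.single m (n j) + Pi.single j (n m) : Fin r → ℤ) m = n j by
      rw [Pi.add_apply, Pi.single_eq_same,
        Pi.single_eq_of_ne (Ne.symm (Finset.ne_of_mem_erase hj)), add_zero]),
      Pi.single_eq_same]
    have h2 := Finset.sum_erase_add Finset.univ n (Finset.mem_univ m)
    rw [hsum] at h2
    linarith
  · have hm : m ∈ Finset.univ.erase i := Finset.mem_erase.mpr ⟨h, Finset.mem_univ m⟩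
    rw [← Finset.add_sum_erase _ _ hm, Pi.add_apply, Pi.single_eq_same, Pi.single_eq_of_ne h,
      Finset.sum_eq_zero (fun j hj => show (Pi.single i (n j) + Pi.single j (n i) : Fin r → ℤ) m = 0 by
        rw [Pi.add_apply, Pi.single_eq_of_ne h,
          Pi.single_eq_of_ne (Finset.ne_of_mem_erase hj).symm, add_zero]),
      Pi.single_eq_of_ne h]
    ring

lemma zone (n : Fin r → ℤ) (hsum : ∑ i, n i = -2) (i : Fin r) :
    (fun _ => n i : Fin r → ℤ) ∈ Zsub n := by
  rw [zone_identity n hsum i]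
  exact add_mem
    (AddSubgroup.sum_mem _ fun j hj => ztau n (Finset.ne_of_mem_erase hj).symm)
    (zsingle n i 2)

lemma z2e_identity (n : Fin r → ℤ) (i j k : Fin r) (hij : i ≠ j) (hik : i ≠ k) (hjk : j ≠ k) :
    (Pi.single i (2 * n j * n k) : Fin r → ℤ) =
      n k • (Pi.single i (n j) + Pi.single j (n i))
        + n j • (Pi.single i (n k) + Pi.single k (n i))
        - n i • (Pi.single j (n k) + Pi.single k (n j)) := by
  funext m
  simp only [Pi.add_apply, Pi.sub_apply, Pi.smul_apply, smul_eq_mul]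
  rcases eq_or_ne m i with rfl | hi
  · rw [Pi.single_eq_same, Pi.single_eq_same, Pi.single_eq_same,
      Pi.single_eq_of_ne hij, Pi.single_eq_of_ne hik, Pi.single_eq_of_ne hij, Pi.single_eq_of_ne hik]
    ring
  · rw [Pi.single_eq_of_ne hi, Pi.single_eq_of_ne hi, Pi.single_eq_of_ne hi]
    rcases eq_or_ne m j with rfl | hj
    · rw [Pi.single_eq_same, Pi.single_eq_same, Pi.single_eq_of_ne hjk, Pi.single_eq_of_ne hjk]
      ring
    · rw [Pi.single_eq_of_ne hj, Pi.single_eq_of_ne hj]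
      rcases eq_or_ne m k with rfl | hk
      · rw [Pi.single_eq_same, Pi.single_eq_same]; ring
      · rw [Pi.single_eq_of_ne hk, Pi.single_eq_of_ne hk]; ring

lemma z2e (n : Fin r → ℤ) {i j k : Fin r} (hij : i ≠ j) (hik : i ≠ k) (hjk : j ≠ k) :
    (Pi.single i (2 * n j * n k) : Fin r → ℤ) ∈ Zsub n := by
  rw [z2e_identity n i j k hij hik hjk]
  exact sub_mem (add_mem (AddSubgroup.zsmul_mem _ (ztau n hij) _)
    (AddSubgroup.zsmul_mem _ (ztau n hik) _)) (AddSubgroup.zsmul_mem _ (ztau n hjk) _)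

lemma gcd_mem (J : AddSubgroup ℤ) {a b : ℤ} (ha : a ∈ J) (hb : b ∈ J) :
    ((Int.gcd a b : ℕ) : ℤ) ∈ J := by
  rw [Int.gcd_eq_gcd_ab]
  exact J.add_mem
    (by simpa [smul_eq_mul, mul_comm] using J.zsmul_mem ha (Int.gcdA a b))
    (by simpa [smul_eq_mul, mul_comm] using J.zsmul_mem hb (Int.gcdB a b))

lemma finsetgcd_mem {ι : Type*} (J : AddSubgroup ℤ) (s : Finset ι) (f : ι → ℤ)
    (h : ∀ k ∈ s, f k ∈ J) : ((s.gcd fun k => (f k).natAbs : ℕ) : ℤ) ∈ J := by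
  classical
  induction s using Finset.induction_on with
  | empty => simpa using J.zero_mem
  | @insert a s hns ih =>
      rw [Finset.gcd_insert]
      have h1 : ((Int.gcd (f a) ((s.gcd fun k => (f k).natAbs : ℕ) : ℤ) : ℕ) : ℤ) ∈ J :=
        gcd_mem J (h a (Finset.mem_insert_self a s)) (ih fun k hk => h k (Finset.mem_insert_of_mem hk))
      have h2 : Int.gcd (f a) ((s.gcd fun k => (f k).natAbs : ℕ) : ℤ)
          = GCDMonoid.gcd ((f a).natAbs) (s.gcd fun k => (f k).natAbs) := by
        rw [Int.gcd]
        simp [Int.natAbs_natCast]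
        rfl
      rwa [h2] at h1

lemma exists_coprime_mul_dvd {p : ℕ} (hp : p.Prime) {W N : ℕ} (hW : W ≠ 0) (δ : ℤ)
    (hWN : ∀ t : ℕ, p ^ t ∣ W → p ^ t ∣ N) (hNδ : (N : ℤ) ∣ δ) :
    ∃ c' : ℕ, ¬ (p : ℤ) ∣ (c' : ℤ) ∧ (W : ℤ) ∣ (c' : ℤ) * δ := by
  rcases eq_or_ne δ 0 with rfl | hδ0
  · refine ⟨1, ?_, by simp⟩
    intro h
    have : p ∣ 1 := by exact_mod_cast h
    exact hp.one_lt.ne' (Nat.eq_one_of_dvd_one this ▸ rfl)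
  · set d := Nat.gcd W δ.natAbs with hd
    have hdW : d ∣ W := Nat.gcd_dvd_left _ _
    have hdδ : d ∣ δ.natAbs := Nat.gcd_dvd_right _ _
    obtain ⟨w', hw'⟩ := hdW
    obtain ⟨a', ha'⟩ := hdδ
    have hd0 : d ≠ 0 := fun h => hW (by simp [hw', h])
    refine ⟨w', ?_, ?_⟩
    · intro hpw
      have hpw' : p ∣ w' := Int.ofNat_dvd.mp hpw
      set t := W.factorization p with ht
      have hptW : p ^ t ∣ W := Nat.ordProj_dvd W p
      have hptN : p ^ t ∣ N := hWN t hptW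
      have hptδ : p ^ t ∣ δ.natAbs := by
        have : (N : ℤ) ∣ (δ.natAbs : ℤ) := (Int.dvd_natAbs).mpr hNδ
        exact hptN.trans (Int.ofNat_dvd.mp this)
      have hptd : p ^ t ∣ d := Nat.dvd_gcd hptW hptδ
      have : p ^ (t + 1) ∣ W := by
        rw [hw', pow_succ]
        exact mul_dvd_mul hptd hpw'
      exact Nat.pow_succ_factorization_not_dvd hW hp this
    · have : (W : ℤ) ∣ ((w' * δ.natAbs : ℕ) : ℤ) := by
        rw [show w' * δ.natAbs = W * a' by rw [hw', ha']; ring]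
        exact Int.ofNat_dvd.mpr ⟨a', rfl⟩
      have h2 : (W : ℤ) ∣ (w' : ℤ) * (δ.natAbs : ℤ) := by exact_mod_cast this
      rcases Int.natAbs_eq δ with h | h
      · rw [h] at *; exact h2
      · rw [h, mul_neg]; exact (dvd_neg).mpr h2

lemma singles_case (n : Fin r → ℤ) {p : ℕ} (hp : p.Prime) (y : Fin r → ℤ)
    (h : ∀ m : Fin r, ∃ c : ℤ, ¬(p:ℤ) ∣ c ∧ ∀ x : ℤ, Pi.single m (c * x) ∈ Zsub n) :
    ∃ c : ℤ, ¬(p:ℤ) ∣ c ∧ c • y ∈ Zsub n := by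
  choose c hc1 hc2 using h
  refine ⟨∏ m, c m, ?_, ?_⟩
  · intro hdvd
    obtain ⟨m, _, hm⟩ := (Prime.dvd_finset_prod_iff (Nat.prime_iff_prime_int.mp hp) c).mp hdvd
    exact hc1 m hm
  · rw [← Finset.univ_sum_single ((∏ m, c m) • y)]
    refine AddSubgroup.sum_mem _ fun m _ => ?_
    have : ((∏ m', c m') • y) m = c m * ((∏ m' ∈ Finset.univ.erase m, c m') * y m) := by
      rw [Pi.smul_apply, smul_eq_mul, ← Finset.mul_prod_erase Finset.univ c (Finset.mem_univ m)]
      ring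
    rw [this]
    exact hc2 m _

lemma case_one (n : Fin r → ℤ) (hsum : ∑ i, n i = -2) (y : Fin r → ℤ) (i : Fin r) :
    (n i * ∏ m ∈ Finset.univ.erase i, (n m + 1)) • y ∈ Zsub n := by
  have key : (n i * ∏ m ∈ Finset.univ.erase i, (n m + 1)) • y =
      (y i * ∏ m ∈ Finset.univ.erase i, (n m + 1)) • (fun _ => n i : Fin r → ℤ)
        + ∑ m ∈ Finset.univ.erase i, Pi.single m ((n m + 1)
            * ((n i * ∏ l ∈ (Finset.univ.erase i).erase m, (n l + 1)) * (y m - y i))) := by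
    funext k
    simp only [Pi.add_apply, Pi.smul_apply, smul_eq_mul, Finset.sum_apply,
      Pi.single_apply, Finset.sum_ite_eq]
    rcases eq_or_ne k i with rfl | h
    · rw [if_neg (show k ∉ Finset.univ.erase k by simp)]
      ring
    · have hk : k ∈ Finset.univ.erase i := Finset.mem_erase.mpr ⟨h, Finset.mem_univ k⟩
      rw [if_pos hk]
      have hQ := Finset.mul_prod_erase _ (fun l => n l + 1) hk
      linear_combination (n i * (y i - y k)) * hQ
  rw [key]
  exact add_mem (AddSubgroup.zsmul_mem _ (zone n hsum i) _)
    (AddSubgroup.sum_mem _ fun m _ => zsingle n m _)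

section CaseTwo

variable (n : Fin r → ℤ) {i j : Fin r}

lemma mem_sdiff_ne {k : Fin r} (hk : k ∈ Finset.univ \ ({i, j} : Finset (Fin r))) :
    k ≠ i ∧ k ≠ j := by
  simp only [Finset.mem_sdiff, Finset.mem_insert, Finset.mem_singleton] at hk
  exact ⟨fun h => hk.2 (Or.inl h), fun h => hk.2 (Or.inr h)⟩

/-- `P (nᵢ - nⱼ) eᵢ ∈ Z`. -/
lemma zPij (hsum : ∑ i, n i = -2) (hij : i ≠ j) :
    (Pi.single i ((∏ k ∈ Finset.univ \ {i, j}, (n k + 1)) * (n i - n j)) : Fin r → ℤ)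
      ∈ Zsub n := by
  have key : (Pi.single i ((∏ k ∈ Finset.univ \ {i, j}, (n k + 1)) * (n i - n j)) : Fin r → ℤ)
      = (∏ k ∈ Finset.univ \ {i, j}, (n k + 1)) •
          ((fun _ => n i) - (Pi.single i (n j) + Pi.single j (n i)))
        - ∑ k ∈ Finset.univ \ {i, j}, Pi.single k ((n k + 1)
            * ((∏ l ∈ (Finset.univ \ {i, j}).erase k, (n l + 1)) * n i)) := by
    funext m
    simp only [Pi.sub_apply, Pi.smul_apply, Pi.add_apply, smul_eq_mul, Finset.sum_apply,
      Pi.single_apply, Finset.sum_ite_eq]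
    rcases eq_or_ne m i with rfl | hi
    · rw [if_neg (show m ∉ Finset.univ \ ({m, j} : Finset (Fin r)) by simp)]
      simp only [eq_self_iff_true, if_true, if_neg hij]
      ring
    · rcases eq_or_ne m j with rfl | hj
      · rw [if_neg (show m ∉ Finset.univ \ ({i, m} : Finset (Fin r)) by simp)]
        simp only [eq_self_iff_true, if_true, if_neg hi]
        ring
      · have hm : m ∈ Finset.univ \ ({i, j} : Finset (Fin r)) := by
          simp [Finset.mem_sdiff, hi, hj]
        rw [if_pos hm]
        simp only [if_neg hi, if_neg hj]
        have hQ := Finset.mul_prod_erase _ (fun l => n l + 1) hm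
        linear_combination (n i) * hQ
  rw [key]
  exact sub_mem (AddSubgroup.zsmul_mem _ (sub_mem (zone n hsum i) (ztau n hij)) _)
    (AddSubgroup.sum_mem _ fun k _ => zsingle n k _)

/-- `P nₖ eᵢ ∈ Z` for `k ∉ {i, j}`. -/
lemma zPnk {k : Fin r} (hk : k ∈ Finset.univ \ ({i, j} : Finset (Fin r))) :
    (Pi.single i ((∏ l ∈ Finset.univ \ {i, j}, (n l + 1)) * n k) : Fin r → ℤ) ∈ Zsub n := by
  have hki : k ≠ i := (mem_sdiff_ne hk).1
  have hQ := Finset.mul_prod_erase _ (fun l => n l + 1) hk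
  have key : (Pi.single i ((∏ l ∈ Finset.univ \ {i, j}, (n l + 1)) * n k) : Fin r → ℤ)
      = (∏ l ∈ (Finset.univ \ {i, j}).erase k, (n l + 1)) •
          ((n k + 1) • (Pi.single i (n k) + Pi.single k (n i)))
        - Pi.single k ((n k + 1) * ((∏ l ∈ (Finset.univ \ {i, j}).erase k, (n l + 1)) * n i)) := by
    funext m
    simp only [Pi.sub_apply, Pi.smul_apply, Pi.add_apply, smul_eq_mul, Pi.single_apply]
    rcases eq_or_ne m i with rfl | hi
    · simp only [eq_self_iff_true, if_true, if_neg hki.symm]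
      linear_combination (n k) * hQ.symm
    · rcases eq_or_ne m k with rfl | hm
      · simp only [eq_self_iff_true, if_true, if_neg hi]
        ring
      · simp only [if_neg hi, if_neg hm]
        ring
  rw [key]
  exact sub_mem (AddSubgroup.zsmul_mem _ (AddSubgroup.zsmul_mem _ (ztau n hki.symm) _) _)
    (zsingle n k _)

/-- `P (nⱼ+1) nᵢ eᵢ ∈ Z`. -/
lemma zPaj (hsum : ∑ i, n i = -2) (hij : i ≠ j) :
    (Pi.single i ((∏ k ∈ Finset.univ \ {i, j}, (n k + 1)) * ((n j + 1) * n i)) : Fin r → ℤ)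
      ∈ Zsub n := by
  have key : (Pi.single i ((∏ k ∈ Finset.univ \ {i, j}, (n k + 1)) * ((n j + 1) * n i)) : Fin r → ℤ)
      = ((∏ k ∈ Finset.univ \ {i, j}, (n k + 1)) * (n j + 1)) • (fun _ => n i : Fin r → ℤ)
        - Pi.single j ((n j + 1) * ((∏ k ∈ Finset.univ \ {i, j}, (n k + 1)) * n i))
        - ∑ k ∈ Finset.univ \ {i, j}, Pi.single k ((n k + 1)
            * ((∏ l ∈ (Finset.univ \ {i, j}).erase k, (n l + 1)) * ((n j + 1) * n i))) := by
    funext m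
    simp only [Pi.sub_apply, Pi.smul_apply, smul_eq_mul, Finset.sum_apply,
      Pi.single_apply, Finset.sum_ite_eq]
    rcases eq_or_ne m i with rfl | hi
    · rw [if_neg (show m ∉ Finset.univ \ ({m, j} : Finset (Fin r)) by simp)]
      simp only [eq_self_iff_true, if_true, if_neg hij]
      ring
    · rcases eq_or_ne m j with rfl | hj
      · rw [if_neg (show m ∉ Finset.univ \ ({i, m} : Finset (Fin r)) by simp)]
        simp only [eq_self_iff_true, if_true, if_neg hi]
        ring
      · have hm : m ∈ Finset.univ \ ({i, j} : Finset (Fin r)) := by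
          simp [Finset.mem_sdiff, hi, hj]
        rw [if_pos hm]
        simp only [if_neg hi, if_neg hj]
        have hQ := Finset.mul_prod_erase _ (fun l => n l + 1) hm
        linear_combination ((n j + 1) * n i) * hQ
  rw [key]
  exact sub_mem (sub_mem (AddSubgroup.zsmul_mem _ (zone n hsum i) _) (zsingle n j _))
    (AddSubgroup.sum_mem _ fun k _ => zsingle n k _)

end CaseTwo

lemma exists_coprime (n : Fin r → ℤ) (hn : ∀ i, n i ≠ -1) (hsum : ∑ i, n i = -2)
    (hodd : (Finset.univ.filter fun i => Odd (n i)).card ≤ 2)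
    (y : Fin r → ℤ) (hy : ∀ i j, i ≠ j → (Npair n i j : ℤ) ∣ y i - y j)
    {p : ℕ} (hp : p.Prime) :
    ∃ c : ℤ, ¬ (p:ℤ) ∣ c ∧ c • y ∈ Zsub n := by
  classical
  have hpZ : Prime (p : ℤ) := Nat.prime_iff_prime_int.mp hp
  have hSmem : ∀ m : Fin r,
      m ∈ Finset.univ.filter (fun m => (p:ℤ) ∣ (n m + 1)) ↔ (p:ℤ) ∣ (n m + 1) := fun m => by
    simp
  have hSn : ∀ m, (p:ℤ) ∣ (n m + 1) → ¬ (p:ℤ) ∣ n m := by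
    intro m hm hd
    have h1 : (p:ℤ) ∣ 1 := by simpa using dvd_sub hm hd
    have h2 := Int.le_of_dvd one_pos h1
    have h3 : 1 < (p:ℤ) := by exact_mod_cast hp.one_lt
    omega
  by_cases h3 : 3 ≤ (Finset.univ.filter (fun m => (p:ℤ) ∣ (n m + 1))).card
  · -- at least three coordinates: p is odd, use 2 nⱼ nₖ eᵢ
    have hp2 : p ≠ 2 := by
      intro h2
      have hsub : (Finset.univ.filter (fun m => (p:ℤ) ∣ (n m + 1)))
          ⊆ Finset.univ.filter (fun i => Odd (n i)) := by
        intro m hm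
        simp only [Finset.mem_filter, Finset.mem_univ, true_and]
        have hdd : (2:ℤ) ∣ n m + 1 := by
          have := (hSmem m).mp hm
          rw [h2] at this
          exact_mod_cast this
        rcases hdd with ⟨t, ht⟩
        exact ⟨t - 1, by linarith⟩
      have := Finset.card_le_card hsub
      omega
    apply singles_case n hp y
    intro m
    by_cases hm : m ∈ Finset.univ.filter (fun m => (p:ℤ) ∣ (n m + 1))
    · have hcard : 2 ≤ ((Finset.univ.filter (fun m => (p:ℤ) ∣ (n m + 1))).erase m).card := by
        have := Finset.card_erase_of_mem hm
        omega
      obtain ⟨a, ha, b, hb, hab⟩ := Finset.one_lt_card.mp hcard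
      have ham : a ≠ m := Finset.ne_of_mem_erase ha
      have hbm : b ≠ m := Finset.ne_of_mem_erase hb
      have haS := (hSmem a).mp (Finset.mem_of_mem_erase ha)
      have hbS := (hSmem b).mp (Finset.mem_of_mem_erase hb)
      refine ⟨2 * n a * n b, ?_, fun x => ?_⟩
      · intro hdvd
        rcases hpZ.dvd_mul.mp hdvd with h | h
        · rcases hpZ.dvd_mul.mp h with h | h
          · have : p ∣ 2 := by exact_mod_cast h
            exact hp2 ((Nat.prime_dvd_prime_iff_eq hp Nat.prime_two).mp this)
          · exact hSn a haS h
        · exact hSn b hbS h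
      · rw [← zsmul_single]
        exact AddSubgroup.zsmul_mem _ (z2e n ham.symm hbm.symm hab) x
    · exact ⟨n m + 1, fun hd => hm ((hSmem m).mpr hd), fun x => zsingle n m x⟩
  by_cases hc2 : (Finset.univ.filter (fun m => (p:ℤ) ∣ (n m + 1))).card = 2
  · -- exactly two coordinates i j
    obtain ⟨i, j, hij, hSij⟩ := Finset.card_eq_two.mp hc2
    have hiS : (p:ℤ) ∣ n i + 1 := (hSmem i).mp (by rw [hSij]; exact Finset.mem_insert_self i {j})
    have hjS : (p:ℤ) ∣ n j + 1 := (hSmem j).mp (by rw [hSij]; simp)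
    have hUS : ∀ k ∈ Finset.univ \ ({i, j} : Finset (Fin r)), ¬ (p:ℤ) ∣ (n k + 1) := by
      intro k hk hd
      have hkS : k ∈ Finset.univ.filter (fun m => (p:ℤ) ∣ (n m + 1)) := (hSmem k).mpr hd
      rw [hSij] at hkS
      simp only [Finset.mem_insert, Finset.mem_singleton] at hkS
      rcases mem_sdiff_ne hk with ⟨h1, h2⟩
      tauto
    have hpP : ¬ (p:ℤ) ∣ ∏ k ∈ Finset.univ \ ({i, j} : Finset (Fin r)), (n k + 1) := by
      intro h
      obtain ⟨k, hk, hdk⟩ := (Prime.dvd_finset_prod_iff hpZ _).mp h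
      exact hUS k hk hdk
    -- the subgroup of values t with t•eᵢ ∈ Z
    obtain ⟨J, hJmem⟩ : ∃ J : AddSubgroup ℤ,
        ∀ t : ℤ, t ∈ J ↔ (Pi.single i t : Fin r → ℤ) ∈ Zsub n :=
      ⟨AddSubgroup.comap
        (AddMonoidHom.mk' (fun t => (Pi.single i t : Fin r → ℤ)) (fun a b => by simp [Pi.single_add]))
        (Zsub n), fun t => Iff.rfl⟩
    obtain ⟨J1, hJ1mem⟩ : ∃ J1 : AddSubgroup ℤ, ∀ t : ℤ,
        t ∈ J1 ↔ (∏ k ∈ Finset.univ \ ({i, j} : Finset (Fin r)), (n k + 1)) * t ∈ J :=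
      ⟨J.comap (AddMonoidHom.mulLeft _), fun t => Iff.rfl⟩
    have hb : (n i - n j) ∈ J1 := by rw [hJ1mem, hJmem]; exact zPij n hsum hij
    have hck : ∀ k ∈ Finset.univ \ ({i, j} : Finset (Fin r)), n k ∈ J1 := fun k hk => by
      rw [hJ1mem, hJmem]; exact zPnk n hk
    have hdj : (n j + 1) * n i ∈ J1 := by rw [hJ1mem, hJmem]; exact zPaj n hsum hij
    have hW1 : (((Finset.univ \ ({i, j} : Finset (Fin r))).gcd fun k => (n k).natAbs : ℕ) : ℤ)
        ∈ J1 := finsetgcd_mem J1 _ n hck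
    have hG1mem : ((Int.gcd (((Finset.univ \ ({i, j} : Finset (Fin r))).gcd
        fun k => (n k).natAbs : ℕ) : ℤ) (n i - n j) : ℕ) : ℤ) ∈ J1 := gcd_mem J1 hW1 hb
    have hG2mem : ((Int.gcd ((Int.gcd (((Finset.univ \ ({i, j} : Finset (Fin r))).gcd
        fun k => (n k).natAbs : ℕ) : ℤ) (n i - n j) : ℕ) : ℤ) ((n j + 1) * n i) : ℕ) : ℤ)
        ∈ J1 := gcd_mem J1 hG1mem hdj
    have hai : (n i + 1) ∈ J := by rw [hJmem]; simpa using zsingle n i 1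
    have hWmem : ((Int.gcd
        ((∏ k ∈ Finset.univ \ ({i, j} : Finset (Fin r)), (n k + 1)) *
          ((Int.gcd ((Int.gcd (((Finset.univ \ ({i, j} : Finset (Fin r))).gcd
            fun k => (n k).natAbs : ℕ) : ℤ) (n i - n j) : ℕ) : ℤ) ((n j + 1) * n i) : ℕ) : ℤ))
        (n i + 1) : ℕ) : ℤ) ∈ J := gcd_mem J ((hJ1mem _).mp hG2mem) hai
    have hW0 : (Int.gcd
        ((∏ k ∈ Finset.univ \ ({i, j} : Finset (Fin r)), (n k + 1)) *
          ((Int.gcd ((Int.gcd (((Finset.univ \ ({i, j} : Finset (Fin r))).gcd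
            fun k => (n k).natAbs : ℕ) : ℤ) (n i - n j) : ℕ) : ℤ) ((n j + 1) * n i) : ℕ) : ℤ))
        (n i + 1) : ℕ) ≠ 0 := by
      intro h
      have h2 := Int.gcd_eq_zero_iff.mp h
      exact hn i (by linarith [h2.2])
    have hWN : ∀ t : ℕ, p ^ t ∣ (Int.gcd
        ((∏ k ∈ Finset.univ \ ({i, j} : Finset (Fin r)), (n k + 1)) *
          ((Int.gcd ((Int.gcd (((Finset.univ \ ({i, j} : Finset (Fin r))).gcd
            fun k => (n k).natAbs : ℕ) : ℤ) (n i - n j) : ℕ) : ℤ) ((n j + 1) * n i) : ℕ) : ℤ))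
        (n i + 1) : ℕ) → p ^ t ∣ Npair n i j := by
      intro t ht
      have h1 : ((Int.gcd
          ((∏ k ∈ Finset.univ \ ({i, j} : Finset (Fin r)), (n k + 1)) *
            ((Int.gcd ((Int.gcd (((Finset.univ \ ({i, j} : Finset (Fin r))).gcd
              fun k => (n k).natAbs : ℕ) : ℤ) (n i - n j) : ℕ) : ℤ) ((n j + 1) * n i) : ℕ) : ℤ))
          (n i + 1) : ℕ) : ℤ) ∣
          ((∏ k ∈ Finset.univ \ ({i, j} : Finset (Fin r)), (n k + 1)) *
            ((Int.gcd ((Int.gcd (((Finset.univ \ ({i, j} : Finset (Fin r))).gcd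
              fun k => (n k).natAbs : ℕ) : ℤ) (n i - n j) : ℕ) : ℤ) ((n j + 1) * n i) : ℕ) : ℤ)) :=
        Int.gcd_dvd_left _ _
      have h1n : (Int.gcd
          ((∏ k ∈ Finset.univ \ ({i, j} : Finset (Fin r)), (n k + 1)) *
            ((Int.gcd ((Int.gcd (((Finset.univ \ ({i, j} : Finset (Fin r))).gcd
              fun k => (n k).natAbs : ℕ) : ℤ) (n i - n j) : ℕ) : ℤ) ((n j + 1) * n i) : ℕ) : ℤ))
          (n i + 1) : ℕ) ∣
          (∏ k ∈ Finset.univ \ ({i, j} : Finset (Fin r)), (n k + 1)).natAbs *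
          (Int.gcd ((Int.gcd (((Finset.univ \ ({i, j} : Finset (Fin r))).gcd
            fun k => (n k).natAbs : ℕ) : ℤ) (n i - n j) : ℕ) : ℤ) ((n j + 1) * n i) : ℕ) := by
        have := Int.natCast_dvd.mp h1
        rwa [Int.natAbs_mul, Int.natAbs_natCast] at this
      have hcop : Nat.Coprime (p ^ t)
          (∏ k ∈ Finset.univ \ ({i, j} : Finset (Fin r)), (n k + 1)).natAbs :=
        Nat.Coprime.pow_left t ((Nat.Prime.coprime_iff_not_dvd hp).mpr
          (fun hd => hpP (natdvd_to_int hd)))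
      have hptG2 : p ^ t ∣ (Int.gcd ((Int.gcd (((Finset.univ \ ({i, j} : Finset (Fin r))).gcd
          fun k => (n k).natAbs : ℕ) : ℤ) (n i - n j) : ℕ) : ℤ) ((n j + 1) * n i) : ℕ) :=
        hcop.dvd_of_dvd_mul_left (ht.trans h1n)
      have hG2G1 : (Int.gcd ((Int.gcd (((Finset.univ \ ({i, j} : Finset (Fin r))).gcd
          fun k => (n k).natAbs : ℕ) : ℤ) (n i - n j) : ℕ) : ℤ) ((n j + 1) * n i) : ℕ) ∣
          (Int.gcd (((Finset.univ \ ({i, j} : Finset (Fin r))).gcd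
            fun k => (n k).natAbs : ℕ) : ℤ) (n i - n j) : ℕ) := by
        have hh : ((Int.gcd ((Int.gcd (((Finset.univ \ ({i, j} : Finset (Fin r))).gcd
            fun k => (n k).natAbs : ℕ) : ℤ) (n i - n j) : ℕ) : ℤ) ((n j + 1) * n i) : ℕ) : ℤ) ∣
            ((Int.gcd (((Finset.univ \ ({i, j} : Finset (Fin r))).gcd
              fun k => (n k).natAbs : ℕ) : ℤ) (n i - n j) : ℕ) : ℤ) := Int.gcd_dvd_left _ _
        exact_mod_cast hh
      have hG1W1 : (Int.gcd (((Finset.univ \ ({i, j} : Finset (Fin r))).gcd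
          fun k => (n k).natAbs : ℕ) : ℤ) (n i - n j) : ℕ) ∣
          ((Finset.univ \ ({i, j} : Finset (Fin r))).gcd fun k => (n k).natAbs) := by
        have hh : ((Int.gcd (((Finset.univ \ ({i, j} : Finset (Fin r))).gcd
            fun k => (n k).natAbs : ℕ) : ℤ) (n i - n j) : ℕ) : ℤ) ∣
            ((((Finset.univ \ ({i, j} : Finset (Fin r))).gcd
              fun k => (n k).natAbs : ℕ)) : ℤ) := Int.gcd_dvd_left _ _
        exact_mod_cast hh
      have hptW1 : p ^ t ∣ ((Finset.univ \ ({i, j} : Finset (Fin r))).gcd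
          fun k => (n k).natAbs) := hptG2.trans (hG2G1.trans hG1W1)
      have hptaj : p ^ t ∣ (n j + 1).natAbs := by
        have hg2 : ((Int.gcd ((Int.gcd (((Finset.univ \ ({i, j} : Finset (Fin r))).gcd
            fun k => (n k).natAbs : ℕ) : ℤ) (n i - n j) : ℕ) : ℤ) ((n j + 1) * n i) : ℕ) : ℤ) ∣
            ((n j + 1) * n i) := Int.gcd_dvd_right _ _
        have h4 : (Int.gcd ((Int.gcd (((Finset.univ \ ({i, j} : Finset (Fin r))).gcd
            fun k => (n k).natAbs : ℕ) : ℤ) (n i - n j) : ℕ) : ℤ) ((n j + 1) * n i) : ℕ)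
            ∣ (n j + 1).natAbs * (n i).natAbs := by
          have := Int.natCast_dvd.mp hg2
          rwa [Int.natAbs_mul] at this
        have hcop2 : Nat.Coprime (p ^ t) (n i).natAbs :=
          Nat.Coprime.pow_left t ((Nat.Prime.coprime_iff_not_dvd hp).mpr
            (fun hd => hSn i hiS (natdvd_to_int hd)))
        exact hcop2.dvd_of_dvd_mul_right (hptG2.trans h4)
      have hptai : p ^ t ∣ (n i + 1).natAbs := by
        have h5 : ((Int.gcd
            ((∏ k ∈ Finset.univ \ ({i, j} : Finset (Fin r)), (n k + 1)) *
              ((Int.gcd ((Int.gcd (((Finset.univ \ ({i, j} : Finset (Fin r))).gcd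
                fun k => (n k).natAbs : ℕ) : ℤ) (n i - n j) : ℕ) : ℤ) ((n j + 1) * n i) : ℕ) : ℤ))
            (n i + 1) : ℕ) : ℤ) ∣ (n i + 1) := Int.gcd_dvd_right _ _
        exact ht.trans (Int.natCast_dvd.mp h5)
      exact Nat.dvd_gcd hptW1 (Nat.dvd_gcd hptai hptaj)
    obtain ⟨c', hc'p, hc'dvd⟩ := exists_coprime_mul_dvd hp hW0 (y i - y j) hWN (hy i j hij)
    obtain ⟨q, hq⟩ := hc'dvd
    have hsing : (Pi.single i ((c' : ℤ) * (y i - y j)) : Fin r → ℤ) ∈ Zsub n := by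
      rw [hq, ← zsmul_single]
      exact AddSubgroup.zsmul_mem _ ((hJmem _).mp hWmem) q
    refine ⟨n i * ((∏ k ∈ Finset.univ \ ({i, j} : Finset (Fin r)), (n k + 1)) * (c' : ℤ)),
      ?_, ?_⟩
    · intro hdvd
      rcases hpZ.dvd_mul.mp hdvd with h | h
      · exact hSn i hiS h
      · rcases hpZ.dvd_mul.mp h with h | h
        · exact hpP h
        · exact hc'p h
    · have key : (n i * ((∏ k ∈ Finset.univ \ ({i, j} : Finset (Fin r)), (n k + 1)) * (c' : ℤ))) • y =
          ((∏ k ∈ Finset.univ \ ({i, j} : Finset (Fin r)), (n k + 1)) * (c' : ℤ) * y j) •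
              (fun _ => n i : Fin r → ℤ)
            + (n i * (∏ k ∈ Finset.univ \ ({i, j} : Finset (Fin r)), (n k + 1))) •
                Pi.single i ((c' : ℤ) * (y i - y j))
            + ∑ k ∈ Finset.univ \ ({i, j} : Finset (Fin r)), Pi.single k ((n k + 1)
                * ((n i * ∏ l ∈ (Finset.univ \ ({i, j} : Finset (Fin r))).erase k, (n l + 1))
                    * ((c' : ℤ) * (y k - y j)))) := by
        funext m
        simp only [Pi.add_apply, Pi.smul_apply, smul_eq_mul, Finset.sum_apply,
          Pi.single_apply, Finset.sum_ite_eq]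
        rcases eq_or_ne m i with rfl | hi
        · rw [if_neg (show m ∉ Finset.univ \ ({m, j} : Finset (Fin r)) by simp)]
          simp only [eq_self_iff_true, if_true]
          ring
        · rcases eq_or_ne m j with rfl | hj
          · rw [if_neg (show m ∉ Finset.univ \ ({i, m} : Finset (Fin r)) by simp)]
            simp only [if_neg hi]
            ring
          · have hm : m ∈ Finset.univ \ ({i, j} : Finset (Fin r)) := by
              simp [Finset.mem_sdiff, hi, hj]
            rw [if_pos hm]
            simp only [if_neg hi]
            have hQ := Finset.mul_prod_erase _ (fun l => n l + 1) hm
            linear_combination (n i * (c' : ℤ) * (y j - y m)) * hQ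
      rw [key]
      exact add_mem (add_mem (AddSubgroup.zsmul_mem _ (zone n hsum i) _)
        (AddSubgroup.zsmul_mem _ hsing _))
        (AddSubgroup.sum_mem _ fun k _ => zsingle n k _)
  by_cases hc1 : (Finset.univ.filter (fun m => (p:ℤ) ∣ (n m + 1))).card = 1
  · obtain ⟨i, hSi⟩ := Finset.card_eq_one.mp hc1
    have hiS : (p:ℤ) ∣ n i + 1 := (hSmem i).mp (by rw [hSi]; exact Finset.mem_singleton_self i)
    refine ⟨n i * ∏ m ∈ Finset.univ.erase i, (n m + 1), ?_, case_one n hsum y i⟩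
    intro hdvd
    rcases hpZ.dvd_mul.mp hdvd with h | h
    · exact hSn i hiS h
    · obtain ⟨m, hm, hdm⟩ := (Prime.dvd_finset_prod_iff hpZ _).mp h
      have hmS : m ∈ Finset.univ.filter (fun m => (p:ℤ) ∣ (n m + 1)) := (hSmem m).mpr hdm
      rw [hSi] at hmS
      exact (Finset.ne_of_mem_erase hm) (Finset.mem_singleton.mp hmS)
  · -- no coordinate divisible
    apply singles_case n hp y
    intro m
    refine ⟨n m + 1, fun hd => ?_, fun x => zsingle n m x⟩
    have hmS : m ∈ Finset.univ.filter (fun m => (p:ℤ) ∣ (n m + 1)) := (hSmem m).mpr hd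
    have hpos : 0 < (Finset.univ.filter (fun m => (p:ℤ) ∣ (n m + 1))).card :=
      Finset.card_pos.mpr ⟨m, hmS⟩
    interval_cases h : (Finset.univ.filter (fun m => (p:ℤ) ∣ (n m + 1))).card <;> omega

lemma prod_smul_mem (n : Fin r → ℤ) (y : Fin r → ℤ) :
    (∏ m, (n m + 1)) • y ∈ Zsub n := by
  rw [← Finset.univ_sum_single ((∏ m, (n m + 1)) • y)]
  refine AddSubgroup.sum_mem _ fun m _ => ?_
  have : ((∏ m', (n m' + 1)) • y) m
      = (n m + 1) * ((∏ m' ∈ Finset.univ.erase m, (n m' + 1)) * y m) := by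
    rw [Pi.smul_apply, smul_eq_mul, ← Finset.mul_prod_erase Finset.univ _ (Finset.mem_univ m)]
    ring
  rw [this]
  exact zsingle n m _

lemma mem_Zsub (n : Fin r → ℤ) (hn : ∀ i, n i ≠ -1) (hsum : ∑ i, n i = -2)
    (hodd : (Finset.univ.filter fun i => Odd (n i)).card ≤ 2)
    (y : Fin r → ℤ) (hy : ∀ i j, i ≠ j → (Npair n i j : ℤ) ∣ y i - y j) :
    y ∈ Zsub n := by
  obtain ⟨a, ha⟩ := Int.subgroup_cyclic ((Zsub n).comap (zmultiplesHom (Fin r → ℤ) y))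
  have hmem : ∀ c : ℤ, c • y ∈ Zsub n ↔ a ∣ c := by
    intro c
    rw [show (c • y ∈ Zsub n) ↔ c ∈ ((Zsub n).comap (zmultiplesHom (Fin r → ℤ) y)) from Iff.rfl,
      ha, AddSubgroup.mem_closure_singleton]
    constructor
    · rintro ⟨k, rfl⟩
      exact ⟨k, by rw [smul_eq_mul]; ring⟩
    · rintro ⟨k, rfl⟩
      exact ⟨k, by rw [smul_eq_mul]; ring⟩
  have hM : a ∣ ∏ m, (n m + 1) := (hmem _).mp (prod_smul_mem n y)
  have hprodne : (∏ m, (n m + 1)) ≠ 0 :=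
    Finset.prod_ne_zero_iff.mpr (fun m _ h => hn m (by linarith))
  have ha0 : a ≠ 0 := fun h => hprodne (zero_dvd_iff.mp (h ▸ hM))
  have hA1 : a.natAbs = 1 := by
    by_contra hA
    obtain ⟨pp, hpp, hdvd⟩ := Nat.exists_prime_and_dvd hA
    obtain ⟨c, hcp, hcy⟩ := exists_coprime n hn hsum hodd y hy hpp
    exact hcp ((natdvd_to_int hdvd).trans ((hmem c).mp hcy))
  have hone : a ∣ 1 := by
    have h1 : ((a.natAbs : ℕ) : ℤ) ∣ 1 := by rw [hA1]; exact one_dvd _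
    exact Int.natAbs_dvd.mp h1
  simpa using (hmem 1).mpr hone

lemma tau_mem_ker (n : Fin r → ℤ) {i j : Fin r} (hij : i ≠ j) :
    Phibar n (tau n i j) = 0 := by
  have htau : ∀ k, tau n i j k =
      (((if k = i then n j else 0) + (if k = j then n i else 0) : ℤ)
        : ZMod ((n k + 1).natAbs)) := by
    intro k
    show esingle n i (n j) k + esingle n j (n i) k = _
    unfold esingle
    rcases eq_or_ne k i with rfl | h1
    · rw [if_pos rfl, if_neg hij, Pi.single_eq_same, Pi.single_eq_of_ne hij]
      simp
    · rcases eq_or_ne k j with rfl | h2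
      · rw [if_neg h1, if_pos rfl, Pi.single_eq_same, Pi.single_eq_of_ne h1]
        simp
      · rw [if_neg h1, if_neg h2, Pi.single_eq_of_ne h1, Pi.single_eq_of_ne h2]
        simp
  funext q
  obtain ⟨⟨a, b⟩, hab⟩ := q
  show ZMod.castHom (Npair_dvd_fst n a b) (ZMod (Npair n a b)) (tau n i j a)
      - ZMod.castHom (Npair_dvd_snd n a b) (ZMod (Npair n a b)) (tau n i j b) = 0
  rw [htau a, htau b, map_intCast, map_intCast, ← Int.cast_sub,
    ZMod.intCast_zmod_eq_zero_iff_dvd]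
  have hne : a ≠ b := Fin.ne_of_lt hab
  by_cases h1 : a = i
  · by_cases h4 : b = j
    · rw [if_pos h1, if_neg (show a ≠ j from fun h => hij (h1.symm.trans h)),
        if_neg (show b ≠ i from fun h => hne (h1.trans h.symm)), if_pos h4,
        ← h1, ← h4]
      have D := dvd_sub (Npair_dvd_int_snd n a b) (Npair_dvd_int_fst n a b)
      convert D using 1
      exacts [rfl, by ring]
    · by_cases h3 : b = i
      · exact absurd (h1.trans h3.symm) hne
      · rw [if_pos h1, if_neg (show a ≠ j from fun h => hij (h1.symm.trans h)),
          if_neg h3, if_neg h4]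
        have D := Npair_dvd_other n (i := a) (j := b) (k := j)
          (fun h => hij ((h.trans h1).symm)) (fun h => h4 h.symm)
        convert D using 1
        ring
  · by_cases h2 : a = j
    · by_cases h3 : b = i
      · rw [if_neg h1, if_pos h2, if_pos h3,
          if_neg (show b ≠ j from fun h => hne (h2.trans h.symm)), ← h2, ← h3]
        have D := dvd_sub (Npair_dvd_int_snd n a b) (Npair_dvd_int_fst n a b)
        convert D using 1
        exacts [rfl, by ring]
      · by_cases h4 : b = j
        · exact absurd (h2.trans h4.symm) hne
        · rw [if_neg h1, if_pos h2, if_neg h3, if_neg h4]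
          have D := Npair_dvd_other n (i := a) (j := b) (k := i)
            (fun h => hij (h.trans h2)) (fun h => h3 h.symm)
          convert D using 1
          ring
    · by_cases h3 : b = i
      · rw [if_neg h1, if_neg h2, if_pos h3,
          if_neg (show b ≠ j from fun h => hij (h3.symm.trans h))]
        have D := Npair_dvd_other n (i := a) (j := b) (k := j)
          (fun h => h2 h.symm) (fun h => hij ((h.trans h3).symm))
        convert dvd_neg.mpr D using 1
        exacts [rfl, by ring]
      · by_cases h4 : b = j
        · rw [if_neg h1, if_neg h2, if_neg h3, if_pos h4]
          have D := Npair_dvd_other n (i := a) (j := b) (k := i)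
            (fun h => h1 h.symm) (fun h => hij (h.trans h4))
          convert dvd_neg.mpr D using 1
          exacts [rfl, by ring]
        · rw [if_neg h1, if_neg h2, if_neg h3, if_neg h4]
          simp

end HsubProof

/-- If `r ≥ 2`, no `n i` equals `-1`, `∑ n i = -2` and at most two indices `i` have `n i` odd,
then `H` is the kernel of `Φ̄`. -/
theorem Hsub_eq_ker_Phibar {r : ℕ} (hr : 2 ≤ r) (n : Fin r → ℤ)
    (hn : ∀ i, n i ≠ -1) (hsum : ∑ i, n i = -2)
    (hodd : (Finset.univ.filter fun i => Odd (n i)).card ≤ 2) :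
    Hsub n = (Phibar n).ker := by
  apply le_antisymm
  · refine AddSubgroup.closure_le _ |>.mpr ?_
    rintro x ⟨i, j, hij, rfl⟩
    exact AddMonoidHom.mem_ker.mpr (HsubProof.tau_mem_ker n hij)
  · intro x hx
    have hNZ : ∀ m : Fin r, ((n m + 1).natAbs) ≠ 0 :=
      fun m => Int.natAbs_ne_zero.mpr (fun h => hn m (by linarith))
    set y : Fin r → ℤ := fun m => ((x m).val : ℤ) with hydef
    have hxy : HsubProof.pih n y = x := by
      funext m
      haveI : NeZero ((n m + 1).natAbs) := ⟨hNZ m⟩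
      show (((x m).val : ℤ) : ZMod ((n m + 1).natAbs)) = x m
      rw [Int.cast_natCast]
      exact ZMod.natCast_rightInverse (x m)
    have hy : ∀ i j : Fin r, i ≠ j → (Npair n i j : ℤ) ∣ y i - y j := by
      have hker : Phibar n x = 0 := AddMonoidHom.mem_ker.mp hx
      have main : ∀ (i j : Fin r) (h : i < j), (Npair n i j : ℤ) ∣ y i - y j := by
        intro i j h
        have h0 : ZMod.castHom (Npair_dvd_fst n i j) (ZMod (Npair n i j)) (x i)
            - ZMod.castHom (Npair_dvd_snd n i j) (ZMod (Npair n i j)) (x j) = 0 :=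
          congrFun hker ⟨(i, j), h⟩
        rw [← hxy,
          show HsubProof.pih n y i = ((y i : ℤ) : ZMod ((n i + 1).natAbs)) from rfl,
          show HsubProof.pih n y j = ((y j : ℤ) : ZMod ((n j + 1).natAbs)) from rfl,
          map_intCast, map_intCast, ← Int.cast_sub,
          ZMod.intCast_zmod_eq_zero_iff_dvd] at h0
        exact h0
      intro i j hij
      rcases lt_or_gt_of_ne hij with h | h
      · exact main i j h
      · have h2 := main j i h
        rw [HsubProof.Npair_comm n i j]
        have h3 : (Npair n j i : ℤ) ∣ -(y j - y i) := dvd_neg.mpr h2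
        simpa using h3
    have hyZ := HsubProof.mem_Zsub n hn hsum hodd y hy
    rw [← hxy]
    exact hyZ
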